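/- Let N ≥ 3 and let v ∈ L¹(ℝᴺ) be such that v = ∂φ/∂x₁ for some φ in the homogeneous Sobolev space D^{1,2}(ℝᴺ) (i.e. φ ∈ L²_loc with ∇φ ∈ L²). Then ∫_{ℝᴺ} v(x) dx = 0. -/

import Mathlib

open MeasureTheory Complex Filter Set Topology
open scoped ENNReal

namespace Stmt0Aux

variable {m : ℕ}

noncomputable def ι (t : ℝ) (y : Fin m → ℝ) : EuclideanSpace ℝ (Fin (m+1)) :=
  (EuclideanSpace.equiv (Fin (m+1)) ℝ).symm (Fin.insertNth 0 t y)

lemma pi_aff1 (t : ℝ) (y : Fin m → ℝ) :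
    Fin.insertNth 0 t y = Fin.insertNth 0 (0:ℝ) y + t • (Pi.single 0 1 : Fin (m+1) → ℝ) := by
  funext i
  induction i using Fin.cases with
  | zero => simp [Fin.insertNth_zero]
  | succ k => simp [Fin.insertNth_zero, Fin.succ_ne_zero]

lemma ι_aff1 (t : ℝ) (y : Fin m → ℝ) :
    ι t y = ι 0 y + t • EuclideanSpace.single (0 : Fin (m+1)) 1 := by
  unfold ι
  rw [pi_aff1 t y, map_add, _root_.map_smul]
  rfl

lemma pi_aff2 (t s : ℝ) (y : Fin m → ℝ) (j : Fin m) :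
    Fin.insertNth 0 t (y + s • (Pi.single j 1 : Fin m → ℝ))
      = Fin.insertNth 0 t y + s • (Pi.single (Fin.succ j) 1 : Fin (m+1) → ℝ) := by
  funext i
  induction i using Fin.cases with
  | zero => simp [Fin.insertNth_zero, Ne.symm (Fin.succ_ne_zero j)]
  | succ k =>
      have h0 : (Fin.succ k) = (0:Fin (m+1)).succAbove k := by
        simp [Fin.succAbove_zero]
      rw [h0, Pi.add_apply, Pi.smul_apply, Fin.insertNth_apply_succAbove,
        Fin.insertNth_apply_succAbove, Pi.add_apply, Pi.smul_apply, ← h0]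
      simp [Pi.single_apply, Fin.succ_inj]

lemma ι_aff2 (t s : ℝ) (y : Fin m → ℝ) (j : Fin m) :
    ι t (y + s • (Pi.single j 1 : Fin m → ℝ))
      = ι t y + s • EuclideanSpace.single (Fin.succ j) 1 := by
  unfold ι
  rw [pi_aff2 t s y j, map_add, _root_.map_smul]
  rfl

lemma key1 (φ : EuclideanSpace ℝ (Fin (m+1)) → ℝ) (hφ : Differentiable ℝ φ) (y : Fin m → ℝ)
    (t : ℝ) :
    HasDerivAt (fun t => φ (ι t y)) (fderiv ℝ φ (ι t y) (EuclideanSpace.single 0 1)) t := by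
  have hline : HasDerivAt (fun u : ℝ => ι u y)
      (EuclideanSpace.single (0 : Fin (m+1)) (1:ℝ)) t := by
    have h : (fun u : ℝ => ι u y)
        = fun u : ℝ => ι 0 y + u • EuclideanSpace.single (0 : Fin (m+1)) (1:ℝ) :=
      funext fun u => ι_aff1 u y
    rw [h]
    simpa using ((hasDerivAt_id t).smul_const
      (EuclideanSpace.single (0 : Fin (m+1)) (1:ℝ))).const_add (ι 0 y)
  exact (hφ (ι t y)).hasFDerivAt.comp_hasDerivAt t hline

lemma key2 (φ : EuclideanSpace ℝ (Fin (m+1)) → ℝ) (hφ : Differentiable ℝ φ) (y : Fin m → ℝ)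
    (t : ℝ) (j : Fin m) (s : ℝ) :
    HasDerivAt (fun s : ℝ => φ (ι t (y + s • (Pi.single j 1 : Fin m → ℝ))))
      (fderiv ℝ φ (ι t (y + s • (Pi.single j 1 : Fin m → ℝ)))
        (EuclideanSpace.single (Fin.succ j) 1)) s := by
  have hline : HasDerivAt (fun u : ℝ => ι t (y + u • (Pi.single j 1 : Fin m → ℝ)))
      (EuclideanSpace.single (Fin.succ j) (1:ℝ)) s := by
    have h : (fun u : ℝ => ι t (y + u • (Pi.single j 1 : Fin m → ℝ)))
        = fun u : ℝ => ι t y + u • EuclideanSpace.single (Fin.succ j) (1:ℝ) :=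
      funext fun u => ι_aff2 t u y j
    rw [h]
    simpa using ((hasDerivAt_id s).smul_const
      (EuclideanSpace.single (Fin.succ j) (1:ℝ))).const_add (ι t y)
  exact (hφ _).hasFDerivAt.comp_hasDerivAt s hline

noncomputable def QE (m : ℕ) : EuclideanSpace ℝ (Fin (m+1)) ≃ᵐ ℝ × (Fin m → ℝ) :=
  (MeasurableEquiv.toLp 2 (Fin (m+1) → ℝ)).symm.trans
    (MeasurableEquiv.piFinSuccAbove (fun _ => ℝ) 0)

lemma QE_mp (m : ℕ) : MeasurePreserving (QE m) volume volume :=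
  (volume_preserving_piFinSuccAbove (fun _ => ℝ) 0).comp
    (EuclideanSpace.volume_preserving_symm_measurableEquiv_toLp _)

lemma mp_ι (m : ℕ) :
    MeasurePreserving (fun z : ℝ × (Fin m → ℝ) => ι z.1 z.2) volume volume :=
  (QE_mp m).symm

lemma emb_ι (m : ℕ) :
    MeasurableEmbedding (fun z : ℝ × (Fin m → ℝ) => ι z.1 z.2) :=
  (QE m).symm.measurableEmbedding

-- Cauchy–Schwarz on a probability measure
lemma aux_sq_integral_le {α : Type*} [MeasurableSpace α] (μ : Measure α) [IsProbabilityMeasure μ]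
    {u : α → ℝ} (hu2 : Integrable (fun s => u s ^ 2) μ) (hum : AEStronglyMeasurable u μ) :
    (∫ s, u s ∂μ) ^ 2 ≤ ∫ s, u s ^ 2 ∂μ := by
  have hu : Integrable u μ := by
    refine Integrable.mono' ((integrable_const 1).add hu2) hum ?_
    filter_upwards with s
    have h1 : |u s| ≤ 1 + u s ^ 2 := by
      nlinarith [sq_nonneg (|u s| - 1), abs_nonneg (u s), _root_.sq_abs (u s)]
    simpa [_root_.abs_of_nonneg] using h1.trans_eq (by simp)
  set I := ∫ s, u s ∂μ with hI
  have h0 : 0 ≤ ∫ s, (u s - I) ^ 2 ∂μ := integral_nonneg fun s => sq_nonneg _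
  have hexp : ∫ s, (u s - I) ^ 2 ∂μ = (∫ s, u s ^ 2 ∂μ) - I ^ 2 := by
    have : ∀ s, (u s - I) ^ 2 = u s ^ 2 - 2 * I * u s + I ^ 2 := fun s => by ring
    simp_rw [this]
    have h1 : Integrable (fun s => u s ^ 2 - 2 * I * u s) μ := hu2.sub (hu.const_mul _)
    rw [integral_add h1 (integrable_const _),
      integral_sub hu2 (hu.const_mul _), integral_const_mul, integral_const]
    simp [← hI]
    ring
  linarith [hexp ▸ h0]

lemma aux_abs_le_one_add_sq (r : ℝ) : |r| ≤ 1 + r ^ 2 := by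
  nlinarith [sq_nonneg (|r| - 1), abs_nonneg r, _root_.sq_abs r]

-- find a good sequence going to infinity
lemma aux_exists_seq (c : ℝ → ℝ≥0∞) (hc : ∫⁻ t, c t ≠ ∞) (G : Set ℝ) (hG : ∀ᵐ t, t ∈ G) :
    ∃ T : ℕ → ℝ, (∀ n : ℕ, (n:ℝ) ≤ T n ∧ T n ∈ G ∧ c (T n) ≤ (((n:ℝ≥0∞)+1))⁻¹) := by
  have : ∀ n : ℕ, ∃ t : ℝ, (n:ℝ) ≤ t ∧ t ∈ G ∧ c t ≤ ((n:ℝ≥0∞)+1)⁻¹ := by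
    intro n
    by_contra h
    push_neg at h
    have hae : ∀ᵐ t ∂(volume.restrict (Ici (n:ℝ))), ((n:ℝ≥0∞)+1)⁻¹ ≤ c t := by
      filter_upwards [ae_restrict_of_ae hG, ae_restrict_mem measurableSet_Ici] with t htG ht
      exact le_of_lt (h t ht htG)
    have hbig : ∫⁻ t in Ici (n:ℝ), ((n:ℝ≥0∞)+1)⁻¹ ∂volume ≤ ∫⁻ t in Ici (n:ℝ), c t :=
      lintegral_mono_ae hae
    rw [setLIntegral_const] at hbig
    have hIci : volume (Ici (n:ℝ)) = ∞ := by simp [Real.volume_Ici]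
    rw [hIci, ENNReal.mul_top (by simp)] at hbig
    have : ∫⁻ t in Ici (n:ℝ), c t ≤ ∫⁻ t, c t := setLIntegral_le_lintegral _ _
    exact hc (top_le_iff.mp (hbig.trans this))
  exact ⟨fun n => (this n).choose, fun n => (this n).choose_spec⟩

lemma aux_shift_inv {m : ℕ} (g : (Fin m → ℝ) → ℝ) (j : Fin m)
    (hg : Integrable g volume)
    (hinv : ∀ᵐ y, g (y + (Pi.single j 1 : Fin m → ℝ)) = g y) :
    ∫ y, g y = 0 := by
  set e : Fin m → ℝ := Pi.single j 1 with he
  set A : ℤ → Set (Fin m → ℝ) := fun k => {y | y j ∈ Ico (k : ℝ) (k + 1)} with hA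
  have hAmeas : ∀ k, MeasurableSet (A k) := fun k =>
    (measurableSet_Ico : MeasurableSet (Ico (k:ℝ) (k+1))).preimage (measurable_pi_apply j)
  have hAdisj : Pairwise (Function.onFun Disjoint A) := by
    intro k l hkl
    refine Set.disjoint_left.2 fun y hyk hyl => hkl ?_
    simp only [hA, mem_setOf_eq, mem_Ico] at hyk hyl
    have h1 : (k:ℝ) < l + 1 := lt_of_le_of_lt hyk.1 hyl.2
    have h2 : (l:ℝ) < k + 1 := lt_of_le_of_lt hyl.1 hyk.2
    have h1' : k < l + 1 := by exact_mod_cast h1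
    have h2' : l < k + 1 := by exact_mod_cast h2
    omega
  have hAunion : (⋃ k, A k) = univ := by
    refine eq_univ_of_forall fun y => mem_iUnion.2 ⟨⌊y j⌋, ?_⟩
    simp only [hA, mem_setOf_eq, mem_Ico]
    exact ⟨Int.floor_le _, Int.lt_floor_add_one _⟩
  have hpre : ∀ k : ℤ, (· + e) ⁻¹' A (k + 1) = A k := by
    intro k
    ext y
    simp only [hA, mem_preimage, mem_setOf_eq, mem_Ico, Pi.add_apply, he, Pi.single_eq_same]
    push_cast
    constructor <;> intro h <;> constructor <;> linarith [h.1, h.2]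
  have hmp : MeasurePreserving (· + e) (volume : Measure (Fin m → ℝ)) volume :=
    measurePreserving_add_right volume e
  have hemb : MeasurableEmbedding (· + e) :=
    (MeasurableEquiv.addRight e).measurableEmbedding
  set c : ℤ → ℝ := fun k => ∫ y in A k, g y with hc
  have hstep : ∀ k : ℤ, c (k + 1) = c k := by
    intro k
    have h1 : ∫ y in (· + e) ⁻¹' A (k+1), g (y + e) = ∫ y in A (k+1), g y :=
      hmp.setIntegral_preimage_emb hemb g (A (k+1))
    rw [hc]
    simp only
    rw [← h1, hpre k]
    exact setIntegral_congr_ae (hAmeas k) (hinv.mono fun y hy _ => hy)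
  have hconst : ∀ k : ℤ, c k = c 0 := by
    intro k
    induction k using Int.induction_on with
    | zero => rfl
    | succ n ih => rw [show ((n:ℤ) + 1) = (n:ℤ) + 1 from rfl, hstep, ih]
    | pred n ih => rw [← ih, ← hstep (-(n:ℤ) - 1)]; norm_num
  have hsum : HasSum c (∫ y, g y) := by
    have h := hasSum_integral_iUnion hAmeas hAdisj (by rw [hAunion]; exact hg.integrableOn)
    rwa [hAunion, Measure.restrict_univ] at h
  have hsum' : HasSum (fun _ : ℤ => c 0) (∫ y, g y) := by
    convert hsum using 1
    exact funext fun k => (hconst k).symm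
  have hc0 : c 0 = 0 := by
    by_contra h
    have h1 := hsum'.summable.tendsto_cofinite_zero
    have h2 : Tendsto (fun _ : ℤ => c 0) cofinite (𝓝 (c 0)) := tendsto_const_nhds
    exact h (tendsto_nhds_unique h2 h1)
  have hfin : HasSum (fun _ : ℤ => (0:ℝ)) (∫ y, g y) := hc0 ▸ hsum'
  exact (hasSum_zero.unique hfin).symm

lemma aux_ae_translate {m : ℕ} (e : Fin m → ℝ) {P : (Fin m → ℝ) → Prop}
    (h : ∀ᵐ y, P y) : ∀ᵐ y, P (y + e) := by
  rw [ae_iff] at h ⊢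
  obtain ⟨S, hSsub, hSmeas, hSnull⟩ := exists_measurable_superset_of_null h
  refine measure_mono_null (fun y hy => mem_preimage.2 (hSsub hy)) ?_
  have h2 := (measurePreserving_add_right (volume : Measure (Fin m → ℝ)) e).measure_preimage
    hSmeas.nullMeasurableSet
  rw [h2, hSnull]

lemma aux_sq_add_le (p q : ℝ≥0∞) : (p + q)^2 ≤ 4 * (p^2 + q^2) := by
  rcases le_total p q with h | h
  · calc (p + q)^2 ≤ (q + q)^2 := by
          exact pow_le_pow_left₀ (zero_le) (add_le_add_left h q) 2
      _ = 4 * q^2 := by ring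
      _ ≤ 4 * (p^2 + q^2) := by
          exact mul_le_mul_right (le_add_self) 4
  · calc (p + q)^2 ≤ (p + p)^2 := by
          exact pow_le_pow_left₀ (zero_le) (add_le_add_right h p) 2
      _ = 4 * p^2 := by ring
      _ ≤ 4 * (p^2 + q^2) := by
          exact mul_le_mul_right (le_self_add) 4

lemma ofReal_norm_eq_coe_nnnorm {E : Type*} [SeminormedAddGroup E] (x : E) :
    ENNReal.ofReal ‖x‖ = (‖x‖₊ : ℝ≥0∞) :=
  ENNReal.ofReal_eq_coe_nnreal (norm_nonneg x)

lemma aux_nnnorm_sq (r : ℝ) : ((‖r ^ 2‖₊ : ℝ≥0∞)) = (‖r‖₊ : ℝ≥0∞) ^ 2 := by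
  rw [← ofReal_norm_eq_coe_nnnorm, ← ofReal_norm_eq_coe_nnnorm, Real.norm_eq_abs,
    Real.norm_eq_abs, _root_.abs_of_nonneg (sq_nonneg r), ← _root_.sq_abs r,
    ENNReal.ofReal_pow (abs_nonneg r)]

end Stmt0Aux
open Stmt0Aux in
set_option maxHeartbeats 2000000 in
/-- If `N ≥ 3`, `v ∈ L¹(ℝᴺ)` and `v = ∂φ/∂x₁` for some `φ` in the homogeneous
Sobolev space `D^{1,2}(ℝᴺ)` (i.e. `φ ∈ L²_loc` with `∇φ ∈ L²`), then `∫ v = 0`. -/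
theorem stmt_0 (N : ℕ) [NeZero N] (hN : 3 ≤ N)
    (φ v : EuclideanSpace ℝ (Fin N) → ℝ)
    (hφdiff : Differentiable ℝ φ)
    (hφloc : LocallyIntegrable φ volume)
    (hφgrad : MemLp (fun x => fderiv ℝ φ x) 2 volume)
    (hv : ∀ x, v x = fderiv ℝ φ x (EuclideanSpace.single 0 1))
    (hvL1 : Integrable v volume) :
    ∫ x, v x = 0 := by
  obtain ⟨m, rfl⟩ : ∃ m, N = m + 1 :=
    ⟨N - 1, (Nat.succ_pred_eq_of_pos (Nat.pos_of_ne_zero (NeZero.ne N))).symm⟩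
  have hm : 0 < m := by omega
  set j : Fin m := ⟨0, hm⟩ with hj
  set e : Fin m → ℝ := Pi.single j 1 with he
  -- the function on the product space
  set w : ℝ × (Fin m → ℝ) → ℝ := fun z => v (ι z.1 z.2) with hwdef
  have hw : Integrable w volume := ((mp_ι m).integrable_comp_emb (emb_ι m)).mpr hvL1
  have hw2 : Integrable w ((volume : Measure ℝ).prod volume) := by
    rwa [← Measure.volume_eq_prod]
  set g : (Fin m → ℝ) → ℝ := fun y => ∫ t, w (t, y) with hgdef
  have hgint : Integrable g volume := hw2.integral_prod_right
  have hsplit : ∫ x, v x = ∫ y, g y := by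
    calc ∫ x, v x = ∫ z, w z ∂volume := ((mp_ι m).integral_comp (emb_ι m) v).symm
    _ = ∫ z, w z ∂((volume : Measure ℝ).prod volume) := by rw [← Measure.volume_eq_prod]
    _ = ∫ t, ∫ y, w (t, y) := integral_prod w hw2
    _ = ∫ y, g y := integral_integral_swap hw2
  have hslice : ∀ᵐ y : Fin m → ℝ, Integrable (fun t => w (t, y)) volume := hw2.prod_left_ae
  have hFTC : ∀ᵐ y : Fin m → ℝ, Integrable (fun t => w (t, y)) volume ∧
      ∀ a b : ℝ, ∫ t in a..b, w (t, y) = φ (ι b y) - φ (ι a y) := by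
    filter_upwards [hslice] with y hy
    refine ⟨hy, fun a b => ?_⟩
    refine intervalIntegral.integral_eq_sub_of_hasDerivAt (f := fun t => φ (ι t y)) (fun t _ => ?_)
      (hy.intervalIntegrable)
    have hk := key1 φ hφdiff y t
    have : w (t, y) = fderiv ℝ φ (ι t y) (EuclideanSpace.single 0 1) := hv _
    rw [this]
    exact hk
  -- the squared gradient on the product space
  set F : ℝ × (Fin m → ℝ) → ℝ≥0∞ := fun z => (‖fderiv ℝ φ (ι z.1 z.2)‖₊ : ℝ≥0∞) ^ 2
    with hFdef
  have hFmeas : Measurable F :=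
    (((measurable_fderiv ℝ φ).comp (emb_ι m).measurable).nnnorm.coe_nnreal_ennreal).pow_const 2
  have htot : ∫⁻ z, F z ∂volume ≠ ⊤ := by
    have h1 : ∫⁻ x, (‖fderiv ℝ φ x‖₊ : ℝ≥0∞) ^ 2 ∂volume < ⊤ := by
      have h2 := lintegral_rpow_enorm_lt_top_of_eLpNorm_lt_top (p := 2) two_ne_zero
        ENNReal.ofNat_ne_top hφgrad.2
      have h3 : ((2 : ℝ≥0∞).toReal) = ((2:ℕ) : ℝ) := by simp
      rw [h3] at h2
      simpa [ENNReal.rpow_natCast, enorm_eq_nnnorm] using h2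
    have h4 := (mp_ι m).lintegral_comp
      (((measurable_fderiv ℝ φ).nnnorm.coe_nnreal_ennreal).pow_const 2)
      (f := fun x => (‖fderiv ℝ φ x‖₊ : ℝ≥0∞) ^ 2)
    have h5 : ∫⁻ z, F z ∂volume = ∫⁻ x, (‖fderiv ℝ φ x‖₊ : ℝ≥0∞) ^ 2 ∂volume := h4
    rw [h5]
    exact h1.ne
  set b : ℝ → ℝ≥0∞ := fun t => ∫⁻ y, F (t, y) with hbdef
  have hbmeas : Measurable b := hFmeas.lintegral_prod_right'
  have hbtot : ∫⁻ t, b t ∂volume ≠ ⊤ := by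
    have h1 : ∫⁻ z, F z ∂((volume : Measure ℝ).prod volume) = ∫⁻ t, b t ∂volume :=
      lintegral_prod F hFmeas.aemeasurable
    rw [← h1, ← Measure.volume_eq_prod]
    exact htot
  set Gs : Set ℝ := {t : ℝ | b t < ⊤} with hGsdef
  have hGmeas : MeasurableSet Gs := measurableSet_lt hbmeas measurable_const
  have hGae : ∀ᵐ t : ℝ, t ∈ Gs := ae_lt_top hbmeas hbtot
  have btrans : ∀ (t : ℝ) (z : Fin m → ℝ), ∫⁻ y, F (t, y + z) = b t := fun t z =>
    lintegral_add_right_eq_self (fun y => F (t, y)) z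
  -- the difference function
  set D : ℝ → (Fin m → ℝ) → ℝ := fun t y => φ (ι t (y + e)) - φ (ι t y) with hDdef
  have hφc : Continuous φ := hφdiff.continuous
  have hDmeas : ∀ t, Measurable (D t) := by
    intro t
    apply Measurable.sub
    · exact (hφc.measurable.comp ((emb_ι m).measurable.comp
        (measurable_const.prodMk (measurable_id.add_const e))))
    · exact (hφc.measurable.comp ((emb_ι m).measurable.comp
        (measurable_const.prodMk measurable_id)))
  set d : EuclideanSpace ℝ (Fin (m+1)) := EuclideanSpace.single (Fin.succ j) 1 with hd
  have claimBound : ∀ t ∈ Gs, ∫⁻ y, (‖D t y‖₊ : ℝ≥0∞) ^ 2 ≤ b t := by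
    intro t ht
    set μ1 : Measure ℝ := volume.restrict (Ioc (0:ℝ) 1) with hμ1
    have hprob : IsProbabilityMeasure μ1 := ⟨by simp [hμ1, Real.volume_Ioc]⟩
    have hmapmeas : Measurable (fun p : (Fin m → ℝ) × ℝ => F (t, p.1 + p.2 • e)) :=
      hFmeas.comp (measurable_const.prodMk (measurable_fst.add (measurable_snd.smul_const e)))
    have hswap : ∫⁻ y, ∫⁻ s, F (t, y + s • e) ∂μ1 ∂volume = b t := by
      rw [lintegral_lintegral_swap hmapmeas.aemeasurable]
      have h1 : ∀ s : ℝ, ∫⁻ y, F (t, y + s • e) ∂volume = b t := fun s => btrans t (s • e)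
      simp_rw [h1]
      simp [lintegral_const]
    have hinnmeas : Measurable (fun y : Fin m → ℝ => ∫⁻ s, F (t, y + s • e) ∂μ1) :=
      Measurable.lintegral_prod_right' hmapmeas
    have hfin : ∀ᵐ y : Fin m → ℝ, ∫⁻ s, F (t, y + s • e) ∂μ1 < ⊤ := by
      apply ae_lt_top hinnmeas
      rw [hswap]
      exact ht.ne
    have hptw : ∀ᵐ y : Fin m → ℝ, (‖D t y‖₊ : ℝ≥0∞) ^ 2 ≤ ∫⁻ s, F (t, y + s • e) ∂μ1 := by
      filter_upwards [hfin] with y hy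
      set u : ℝ → ℝ := fun s => fderiv ℝ φ (ι t (y + s • e)) d with hu
      have hψmeas : Measurable (fun s : ℝ => ι t (y + s • e)) :=
        (emb_ι m).measurable.comp
          (measurable_const.prodMk (measurable_const.add (measurable_id.smul_const e)))
      have humeas : Measurable u := (measurable_fderiv_apply_const ℝ φ d).comp hψmeas
      -- the real-valued squared gradient is integrable on [0,1]
      have hFre : Integrable (fun s => ‖fderiv ℝ φ (ι t (y + s • e))‖ ^ 2) μ1 := by
        constructor
        · exact ((((measurable_fderiv ℝ φ).comp hψmeas).norm).pow_const 2).aestronglyMeasurable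
        · rw [hasFiniteIntegral_def]
          have heq : ∀ s : ℝ, ((‖(‖fderiv ℝ φ (ι t (y + s • e))‖ ^ 2 : ℝ)‖₊ : ℝ≥0∞))
              = F (t, y + s • e) := by
            intro s
            rw [aux_nnnorm_sq, nnnorm_norm]
          simp_rw [enorm_eq_nnnorm, heq]
          exact hy
      have hub : ∀ s : ℝ, |u s| ≤ ‖fderiv ℝ φ (ι t (y + s • e))‖ := by
        intro s
        have h1 := (fderiv ℝ φ (ι t (y + s • e))).le_opNorm d
        have h2 : ‖d‖ = 1 := by rw [hd, EuclideanSpace.norm_single]; norm_num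
        rw [h2, mul_one] at h1
        simpa [Real.norm_eq_abs] using h1
      have hu2 : Integrable (fun s => u s ^ 2) μ1 := by
        refine hFre.mono' (humeas.pow_const 2).aestronglyMeasurable ?_
        filter_upwards with s
        rw [Real.norm_eq_abs, _root_.abs_of_nonneg (sq_nonneg _), ← _root_.sq_abs (u s)]
        exact pow_le_pow_left₀ (abs_nonneg _) (hub s) 2
      have huint : Integrable u μ1 := by
        refine Integrable.mono' ((integrable_const 1).add hu2) humeas.aestronglyMeasurable ?_
        filter_upwards with s
        simpa [Real.norm_eq_abs] using aux_abs_le_one_add_sq (u s)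
      have hCS := aux_sq_integral_le μ1 hu2 humeas.aestronglyMeasurable
      have hftc : D t y = ∫ s, u s ∂μ1 := by
        have hui : IntervalIntegrable u volume 0 1 := by
          rw [intervalIntegrable_iff, Set.uIoc_of_le zero_le_one]
          exact huint
        have h01 := intervalIntegral.integral_eq_sub_of_hasDerivAt
          (f := fun s : ℝ => φ (ι t (y + s • e))) (f' := u) (a := 0) (b := 1)
          (fun s _ => by
            show HasDerivAt _ (u s) s
            rw [hu]
            simp only
            rw [he, hd]
            exact key2 φ hφdiff y t j s) hui
        have h02 : ∫ s in (0:ℝ)..1, u s = ∫ s, u s ∂μ1 := by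
          rw [intervalIntegral.integral_of_le zero_le_one]
        have h03 : φ (ι t (y + (1:ℝ) • e)) - φ (ι t (y + (0:ℝ) • e)) = ∫ s, u s ∂μ1 := by
          rw [← h02, h01]
        rw [hDdef]
        simp only
        rw [← h03, one_smul, zero_smul, add_zero]
      calc ((‖D t y‖₊ : ℝ≥0∞)) ^ 2 = ENNReal.ofReal ((D t y) ^ 2) := by
            rw [← ofReal_norm_eq_coe_nnnorm, ← ENNReal.ofReal_pow (norm_nonneg _)]
            congr 1
            rw [Real.norm_eq_abs, _root_.sq_abs]
        _ ≤ ENNReal.ofReal (∫ s, u s ^ 2 ∂μ1) := by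
            apply ENNReal.ofReal_le_ofReal
            rw [hftc]
            exact hCS
        _ = ∫⁻ s, ENNReal.ofReal (u s ^ 2) ∂μ1 :=
            ofReal_integral_eq_lintegral_ofReal hu2
              (Filter.Eventually.of_forall fun s => sq_nonneg _)
        _ ≤ ∫⁻ s, F (t, y + s • e) ∂μ1 := by
            apply lintegral_mono
            intro s
            calc ENNReal.ofReal (u s ^ 2)
                ≤ ENNReal.ofReal (‖fderiv ℝ φ (ι t (y + s • e))‖ ^ 2) := by
                  apply ENNReal.ofReal_le_ofReal
                  rw [← _root_.sq_abs (u s)]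
                  exact pow_le_pow_left₀ (abs_nonneg _) (hub s) 2
              _ = F (t, y + s • e) := by
                  rw [ENNReal.ofReal_pow (norm_nonneg _), ofReal_norm_eq_coe_nnnorm]
    calc ∫⁻ y, (‖D t y‖₊ : ℝ≥0∞) ^ 2 ≤ ∫⁻ y, ∫⁻ s, F (t, y + s • e) ∂μ1 :=
        lintegral_mono_ae hptw
    _ = b t := hswap
  -- choose the sequence T going to infinity with small gradient slices
  set c : ℝ → ℝ≥0∞ := fun t => b t + b (-t) with hcdef
  have hbneg : ∫⁻ t, b (-t) ∂volume = ∫⁻ t, b t ∂volume :=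
    (Measure.measurePreserving_neg (volume : Measure ℝ)).lintegral_comp hbmeas
  have hctot : ∫⁻ t, c t ∂volume ≠ ⊤ := by
    rw [hcdef]
    simp only
    rw [lintegral_add_left hbmeas, hbneg]
    exact ENNReal.add_ne_top.mpr ⟨hbtot, hbtot⟩
  have hGs2 : ∀ᵐ t : ℝ, t ∈ Gs ∩ Neg.neg ⁻¹' Gs := by
    have h1 : ∀ᵐ t : ℝ, -t ∈ Gs := by
      rw [ae_iff] at hGae ⊢
      have h2 := (Measure.measurePreserving_neg (volume : Measure ℝ)).measure_preimage
        (hGmeas.compl).nullMeasurableSet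
      have h3 : {t : ℝ | ¬ -t ∈ Gs} = Neg.neg ⁻¹' Gsᶜ := rfl
      rw [h3, h2]
      exact hGae
    filter_upwards [hGae, h1] with t ht1 ht2
    exact ⟨ht1, ht2⟩
  obtain ⟨T, hT⟩ := aux_exists_seq c hctot _ hGs2
  have hTtop : Tendsto T atTop atTop :=
    tendsto_atTop_mono (fun n => (hT n).1) tendsto_natCast_atTop_atTop
  have hTbot : Tendsto (fun n => -(T n)) atTop atBot := by
    rw [tendsto_neg_atBot_iff]
    exact hTtop
  set Dn : ℕ → (Fin m → ℝ) → ℝ := fun n y => D (T n) y - D (-(T n)) y with hDndef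
  have hDnmeas : ∀ n, Measurable (Dn n) := fun n => (hDmeas _).sub (hDmeas _)
  have hDnbound : ∀ n, ∫⁻ y, (‖Dn n y‖₊ : ℝ≥0∞) ^ 2 ≤ 4 * (((n:ℝ≥0∞)+1))⁻¹ := by
    intro n
    have h1 : ∀ y, ((‖Dn n y‖₊ : ℝ≥0∞)) ^ 2
        ≤ 4 * ((‖D (T n) y‖₊ : ℝ≥0∞)^2 + (‖D (-(T n)) y‖₊ : ℝ≥0∞)^2) := by
      intro y
      have h2 : ((‖Dn n y‖₊ : ℝ≥0∞)) ≤ (‖D (T n) y‖₊ : ℝ≥0∞) + (‖D (-(T n)) y‖₊ : ℝ≥0∞) := by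
        rw [hDndef]
        simp only
        exact_mod_cast nnnorm_sub_le _ _
      calc ((‖Dn n y‖₊ : ℝ≥0∞)) ^ 2
          ≤ ((‖D (T n) y‖₊ : ℝ≥0∞) + (‖D (-(T n)) y‖₊ : ℝ≥0∞)) ^ 2 :=
            pow_le_pow_left₀ (zero_le) h2 2
        _ ≤ _ := aux_sq_add_le _ _
    calc ∫⁻ y, (‖Dn n y‖₊ : ℝ≥0∞) ^ 2
        ≤ ∫⁻ y, 4 * ((‖D (T n) y‖₊ : ℝ≥0∞)^2 + (‖D (-(T n)) y‖₊ : ℝ≥0∞)^2) :=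
          lintegral_mono h1
      _ = 4 * ((∫⁻ y, (‖D (T n) y‖₊ : ℝ≥0∞)^2) + ∫⁻ y, (‖D (-(T n)) y‖₊ : ℝ≥0∞)^2) := by
          rw [lintegral_const_mul (f := fun y =>
              ((‖D (T n) y‖₊ : ℝ≥0∞)^2 + (‖D (-(T n)) y‖₊ : ℝ≥0∞)^2)) 4
            (((hDmeas _).nnnorm.coe_nnreal_ennreal.pow_const 2).add
            ((hDmeas _).nnnorm.coe_nnreal_ennreal.pow_const 2)), lintegral_add_left ((hDmeas _).nnnorm.coe_nnreal_ennreal.pow_const 2)]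
      _ ≤ 4 * (b (T n) + b (-(T n))) := by
          have hb1 := claimBound _ (hT n).2.1.1
          have hb2 := claimBound _ (hT n).2.1.2
          exact mul_le_mul_right (add_le_add hb1 hb2) 4
      _ ≤ 4 * (((n:ℝ≥0∞)+1))⁻¹ := by
          have h5 := (hT n).2.2
          rw [hcdef] at h5
          exact mul_le_mul_right h5 4
  have hDn0 : Tendsto (fun n => ∫⁻ y, (‖Dn n y‖₊ : ℝ≥0∞) ^ 2) atTop (𝓝 0) := by
    have h1 : Tendsto (fun n : ℕ => (((n:ℝ≥0∞)+1))⁻¹) atTop (𝓝 0) := by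
      have h2 := ENNReal.tendsto_inv_nat_nhds_zero.comp (tendsto_add_atTop_nat 1)
      convert h2 using 2 with n
      · simp [Function.comp]
    have hup : Tendsto (fun n : ℕ => 4 * (((n:ℝ≥0∞)+1))⁻¹) atTop (𝓝 0) := by
      have h3 := ENNReal.Tendsto.const_mul h1 (Or.inr (by norm_num : (4:ℝ≥0∞) ≠ ⊤))
      simpa using h3
    exact tendsto_of_tendsto_of_tendsto_of_le_of_le tendsto_const_nhds hup
      (fun n => zero_le) hDnbound
  have hTIM : TendstoInMeasure volume Dn atTop (fun _ => (0:ℝ)) := by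
    rw [tendstoInMeasure_iff_dist]
    intro ε hε
    have hε2 : (ENNReal.ofReal ε) ^ 2 ≠ 0 :=
      pow_ne_zero _ (by simpa [ENNReal.ofReal_pos] using hε)
    have hε3 : (ENNReal.ofReal ε) ^ 2 ≠ ⊤ := by
      exact ENNReal.pow_ne_top ENNReal.ofReal_ne_top
    have hbound : ∀ n, volume {y : Fin m → ℝ | ε ≤ dist (Dn n y) ((fun _ => (0:ℝ)) y)}
        ≤ (∫⁻ y, (‖Dn n y‖₊:ℝ≥0∞)^2) / (ENNReal.ofReal ε)^2 := by
      intro n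
      have hsub : {y : Fin m → ℝ | ε ≤ dist (Dn n y) 0}
          ⊆ {y | (ENNReal.ofReal ε)^2 ≤ (‖Dn n y‖₊:ℝ≥0∞)^2} := by
        intro y hy
        simp only [mem_setOf_eq, Real.dist_0_eq_abs] at hy ⊢
        have h6 : ENNReal.ofReal ε ≤ (‖Dn n y‖₊ : ℝ≥0∞) := by
          rw [← ofReal_norm_eq_coe_nnnorm, Real.norm_eq_abs]
          exact ENNReal.ofReal_le_ofReal hy
        exact pow_le_pow_left₀ (zero_le) h6 2
      calc volume {y : Fin m → ℝ | ε ≤ dist (Dn n y) 0}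
          ≤ volume {y | (ENNReal.ofReal ε)^2 ≤ (‖Dn n y‖₊:ℝ≥0∞)^2} := measure_mono hsub
        _ ≤ _ := meas_ge_le_lintegral_div ((hDnmeas n).nnnorm.coe_nnreal_ennreal.pow_const 2).aemeasurable hε2 hε3
    refine tendsto_of_tendsto_of_tendsto_of_le_of_le tendsto_const_nhds ?_
      (fun n => zero_le) hbound
    simp only [div_eq_mul_inv]
    have h7 := ENNReal.Tendsto.mul_const hDn0 (Or.inr (ENNReal.inv_ne_top.2 hε2))
    rw [zero_mul] at h7
    exact h7
  obtain ⟨ns, hns, haesub⟩ := hTIM.exists_seq_tendsto_ae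
  have htrans : ∀ᵐ y : Fin m → ℝ, (Integrable (fun t => w (t, y + e)) volume ∧
      ∀ a b : ℝ, ∫ t in a..b, w (t, y + e) = φ (ι b (y + e)) - φ (ι a (y + e))) :=
    aux_ae_translate e hFTC
  have hpt : ∀ᵐ y : Fin m → ℝ, Tendsto (fun n => Dn n y) atTop (𝓝 (g (y + e) - g y)) := by
    filter_upwards [hFTC, htrans] with y hy hz
    have t1 : Tendsto (fun n => φ (ι (T n) y) - φ (ι (-(T n)) y)) atTop (𝓝 (g y)) := by
      have h5 := intervalIntegral_tendsto_integral hy.1 hTbot hTtop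
      exact h5.congr fun n => hy.2 _ _
    have t2 : Tendsto (fun n => φ (ι (T n) (y+e)) - φ (ι (-(T n)) (y+e))) atTop (𝓝 (g (y+e))) := by
      have h5 := intervalIntegral_tendsto_integral hz.1 hTbot hTtop
      exact h5.congr fun n => hz.2 _ _
    have h6 : ∀ n, (φ (ι (T n) (y+e)) - φ (ι (-(T n)) (y+e)))
        - (φ (ι (T n) y) - φ (ι (-(T n)) y)) = Dn n y := by
      intro n
      rw [hDndef, hDdef]
      simp only
      ring
    exact (t2.sub t1).congr h6
  have hinv : ∀ᵐ y : Fin m → ℝ, g (y + e) = g y := by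
    filter_upwards [hpt, haesub] with y h1 h2
    have h3 : Tendsto (fun i => Dn (ns i) y) atTop (𝓝 (g (y+e) - g y)) :=
      h1.comp hns.tendsto_atTop
    have h4 : g (y + e) - g y = 0 := tendsto_nhds_unique h3 h2
    linarith
  rw [hsplit]
  exact aux_shift_inv g j hgint hinv
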